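/- Let A be an expansive dilation with dilated balls 𝔅 = {x + B_k : x ∈ ℝⁿ, k ∈ ℤ}, s ∈ ℤ_{≥0}, and B ∈ 𝔅. There exists a constant C > 0, independent of f and B (depending only on n, s, A), such that for every f ∈ L¹(B), sup_{x∈B} |P_B^s(f)(x)| ≤ C · (1/|B|) ∫_B |f(x)| dx, where P_B^s(f) is the minimizing polynomial of f of degree ≤ s on B. -/

import Mathlib

open MeasureTheory
open scoped Pointwise ENNReal

open MvPolynomial in
lemma aux_eval_analytic {n : ℕ} (Q : MvPolynomial (Fin n) ℝ) :
    AnalyticOnNhd ℝ (fun x : Fin n → ℝ => eval x Q) Set.univ := by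
  simpa using AnalyticOnNhd.eval_continuousLinearMap
    (ContinuousLinearMap.id ℝ (Fin n → ℝ)) Q

open MvPolynomial in
lemma aux_zero_of_eqOn_open {n : ℕ} (Q : MvPolynomial (Fin n) ℝ) {U : Set (Fin n → ℝ)}
    (hU : IsOpen U) (hne : U.Nonempty) (hz : ∀ x ∈ U, eval x Q = 0) : Q = 0 := by
  obtain ⟨x₀, hx₀⟩ := hne
  have h1 : Set.EqOn (fun x : Fin n → ℝ => eval x Q) 0 Set.univ := by
    apply (aux_eval_analytic Q).eqOn_zero_of_preconnected_of_eventuallyEq_zero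
      isPreconnected_univ (Set.mem_univ x₀)
    filter_upwards [hU.mem_nhds hx₀] with x hx
    exact hz x hx
  apply MvPolynomial.funext (q := 0)
  intro x
  simpa using h1 (Set.mem_univ x)

open MvPolynomial in
lemma aux_totalDegree_aeval_le {n : ℕ} (Q : MvPolynomial (Fin n) ℝ)
    (σf : Fin n → MvPolynomial (Fin n) ℝ) (hσ : ∀ i, (σf i).totalDegree ≤ 1) :
    (aeval σf Q).totalDegree ≤ Q.totalDegree := by
  rw [aeval_def, eval₂_eq]
  refine (totalDegree_finset_sum _ _).trans (Finset.sup_le fun d hd => ?_)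
  refine (totalDegree_mul _ _).trans ?_
  have h1 : (algebraMap ℝ (MvPolynomial (Fin n) ℝ) (coeff d Q)).totalDegree = 0 := by
    simpa using totalDegree_C (R := ℝ) (σ := Fin n) (coeff d Q)
  rw [h1, zero_add]
  refine (totalDegree_finset_prod _ _).trans ?_
  calc ∑ i ∈ d.support, (σf i ^ d i).totalDegree
      ≤ ∑ i ∈ d.support, d i * 1 := by
        refine Finset.sum_le_sum fun i _ => ?_
        exact (totalDegree_pow _ _).trans (Nat.mul_le_mul_left _ (hσ i))
    _ = ∑ i ∈ d.support, d i := by simp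
    _ ≤ Q.totalDegree := by
        have := le_totalDegree (p := Q) (s := d) hd
        simpa [Finsupp.sum] using this

open MvPolynomial in
lemma aux_integrableOn {n : ℕ} (g : (Fin n → ℝ) → ℝ) (hg : Continuous g)
    {Δ : Set (Fin n → ℝ)} (hbdd : Bornology.IsBounded Δ) : IntegrableOn g Δ volume := by
  have hK : IsCompact (closure Δ) :=
    Metric.isCompact_of_isClosed_isBounded isClosed_closure hbdd.closure
  exact (hg.continuousOn.integrableOn_compact hK).mono_set subset_closure

open MvPolynomial in
/-- Key finite-dimensional estimate on the fixed domain `Δ`. -/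
lemma aux_key {n s : ℕ} (Δ : Set (Fin n → ℝ)) (hΔo : IsOpen Δ) (hne : Δ.Nonempty)
    (hbdd : Bornology.IsBounded Δ) :
    ∃ c : ℝ, 0 < c ∧ ∀ Q : MvPolynomial (Fin n) ℝ, Q.totalDegree ≤ s →
      ∀ x ∈ closure Δ, (eval x Q) ^ 2 ≤ c * ∫ y in Δ, (eval y Q) ^ 2 := by
  classical
  set E := restrictTotalDegree (Fin n) ℝ s with hE
  have hK : IsCompact (closure Δ) :=
    Metric.isCompact_of_isClosed_isBounded isClosed_closure hbdd.closure
  have hint : ∀ p q : MvPolynomial (Fin n) ℝ,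
      IntegrableOn (fun y => eval y p * eval y q) Δ volume := fun p q =>
    aux_integrableOn _ ((p.continuous_eval).mul (q.continuous_eval)) hbdd
  letI core : InnerProductSpace.Core ℝ E :=
    { inner := fun p q => ∫ y in Δ, eval y (p : MvPolynomial (Fin n) ℝ) *
        eval y (q : MvPolynomial (Fin n) ℝ)
      conj_inner_symm := by
        intro p q
        simp only [starRingEnd_apply, star_trivial]
        congr 1; ext y; ring
      re_inner_nonneg := by
        intro p
        simp only [RCLike.re_to_real]
        refine setIntegral_nonneg hΔo.measurableSet fun y _ => ?_
        exact mul_self_nonneg _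
      definite := by
        intro p hp
        have hnn : 0 ≤ᶠ[ae (volume.restrict Δ)]
            fun y => eval y (p : MvPolynomial (Fin n) ℝ) * eval y (p : MvPolynomial (Fin n) ℝ) :=
          Filter.Eventually.of_forall fun y => mul_self_nonneg _
        have hi := hint (p : MvPolynomial (Fin n) ℝ) (p : MvPolynomial (Fin n) ℝ)
        have hz := (integral_eq_zero_iff_of_nonneg_ae hnn hi).mp hp
        have hzero : ∀ x ∈ Δ, eval x (p : MvPolynomial (Fin n) ℝ) = 0 := by
          by_contra hcon
          push_neg at hcon
          obtain ⟨x₀, hx₀, hx₀ne⟩ := hcon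
          set V := Δ ∩ {x | eval x (p : MvPolynomial (Fin n) ℝ) ≠ 0} with hV
          have hVo : IsOpen V := hΔo.inter
            (isOpen_ne_fun (p : MvPolynomial (Fin n) ℝ).continuous_eval continuous_const)
          have hVne : V.Nonempty := ⟨x₀, hx₀, hx₀ne⟩
          have hpos := hVo.measure_pos volume hVne
          have hsub : V ⊆ {x | eval x (p : MvPolynomial (Fin n) ℝ) *
              eval x (p : MvPolynomial (Fin n) ℝ) ≠ 0} ∩ Δ := by
            rintro x ⟨hx1, hx2⟩
            exact ⟨mul_ne_zero hx2 hx2, hx1⟩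
          have h0 : volume ({x | eval x (p : MvPolynomial (Fin n) ℝ) *
              eval x (p : MvPolynomial (Fin n) ℝ) ≠ 0} ∩ Δ) = 0 := by
            have hae := hz
            rw [Filter.EventuallyEq, ae_restrict_iff' hΔo.measurableSet] at hae
            rw [Filter.eventually_iff, mem_ae_iff] at hae
            refine measure_mono_null ?_ hae
            rintro x ⟨hx1, hx2⟩
            simp only [Set.mem_compl_iff, Set.mem_setOf_eq]
            intro h
            exact hx1 (h hx2)
          exact hpos.ne' (measure_mono_null hsub h0)
        have : (p : MvPolynomial (Fin n) ℝ) = 0 := aux_zero_of_eqOn_open _ hΔo hne hzero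
        exact Subtype.ext this
      add_left := by
        intro p q u
        simp only [Submodule.coe_add]
        rw [← integral_add (hint _ _) (hint _ _)]
        congr 1; ext y; simp [map_add]; ring
      smul_left := by
        intro p q r
        simp only [Submodule.coe_smul, starRingEnd_apply, star_trivial]
        rw [← integral_const_mul]
        congr 1; ext y
        simp [smul_eq_mul]; ring }
  letI : NormedAddCommGroup E := core.toNormedAddCommGroup
  letI : InnerProductSpace ℝ E := InnerProductSpace.ofCore core.toCore
  haveI : FiniteDimensional ℝ E := by
    rw [hE]; infer_instance
  set b := stdOrthonormalBasis ℝ E with hb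
  have hcont : ContinuousOn (fun x => ∑ i, (eval x ((b i : E) : MvPolynomial (Fin n) ℝ)) ^ 2)
      (closure Δ) := by
    refine Continuous.continuousOn ?_
    exact continuous_finset_sum _ fun i _ =>
      (((b i : E) : MvPolynomial (Fin n) ℝ).continuous_eval.pow 2)
  obtain ⟨z, hzK, hzmax⟩ := hK.exists_isMaxOn (hne.closure) hcont
  set c₀ := ∑ i, (eval z ((b i : E) : MvPolynomial (Fin n) ℝ)) ^ 2 with hc₀
  refine ⟨max c₀ 1, lt_max_of_lt_right one_pos, ?_⟩
  intro Q hQ x hx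
  set q : E := ⟨Q, (mem_restrictTotalDegree _ _ _).mpr hQ⟩ with hq
  have hrepr : ∑ i, b.repr q i • b i = q := b.sum_repr q
  have heval : eval x Q = ∑ i, b.repr q i * eval x ((b i : E) : MvPolynomial (Fin n) ℝ) := by
    have := congrArg (fun v : E => eval x ((v : E) : MvPolynomial (Fin n) ℝ)) hrepr
    simp only at this
    rw [← this]
    push_cast
    rw [map_sum]
    congr 1; ext i
    simp [smul_eq_mul]
  have hCS : (eval x Q) ^ 2 ≤ (∑ i, (b.repr q i) ^ 2) *
      (∑ i, (eval x ((b i : E) : MvPolynomial (Fin n) ℝ)) ^ 2) := by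
    rw [heval]
    exact Finset.sum_mul_sq_le_sq_mul_sq _ _ _
  have hsum : ∑ i, (b.repr q i) ^ 2 = ∫ y in Δ, (eval y Q) ^ 2 := by
    have h1 : (inner ℝ q q : ℝ) = ∑ i, (b.repr q i) ^ 2 := by
      rw [← b.repr.inner_map_map q q]
      rw [PiLp.inner_apply]
      congr 1; ext i
      simp [RCLike.inner_apply, sq]
    have h2 : (inner ℝ q q : ℝ) = ∫ y in Δ, (eval y Q) ^ 2 := by
      show (∫ y in Δ, eval y Q * eval y Q) = _
      congr 1; ext y; ring
    rw [← h1, h2]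
  have hbound : (∑ i, (eval x ((b i : E) : MvPolynomial (Fin n) ℝ)) ^ 2) ≤ max c₀ 1 :=
    le_trans (hzmax hx) (le_max_left _ _)
  have hnn : 0 ≤ ∫ y in Δ, (eval y Q) ^ 2 :=
    setIntegral_nonneg hΔo.measurableSet fun y _ => sq_nonneg _
  calc (eval x Q) ^ 2 ≤ (∑ i, (b.repr q i) ^ 2) *
      (∑ i, (eval x ((b i : E) : MvPolynomial (Fin n) ℝ)) ^ 2) := hCS
    _ ≤ (∫ y in Δ, (eval y Q) ^ 2) * max c₀ 1 := by
        rw [hsum]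
        exact mul_le_mul_of_nonneg_left hbound (hsum ▸ hnn)
    _ = max c₀ 1 * ∫ y in Δ, (eval y Q) ^ 2 := mul_comm _ _

/-- Change of variables for affine images. -/
lemma aux_cov {n : ℕ} (M : Matrix (Fin n) (Fin n) ℝ) (hM : IsUnit M.det) (x₀ : Fin n → ℝ)
    {S : Set (Fin n → ℝ)} (hS : MeasurableSet S) (g : (Fin n → ℝ) → ℝ) :
    ∫ x in (fun y => x₀ + M.mulVec y) '' S, g x
      = |M.det| * ∫ y in S, g (x₀ + M.mulVec y) := by
  set Lc : (Fin n → ℝ) →L[ℝ] (Fin n → ℝ) :=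
    LinearMap.toContinuousLinearMap (Matrix.toLin' M) with hLc
  have hLcapp : ∀ y, Lc y = M.mulVec y := by
    intro y
    simp [hLc, Matrix.toLin'_apply]
  have hT : ∀ y ∈ S, HasFDerivWithinAt (fun y => x₀ + M.mulVec y) Lc S y := by
    intro y _
    have h1 : HasFDerivAt (fun y => x₀ + Lc y) Lc y := (Lc.hasFDerivAt).const_add x₀
    have h2 : (fun y => x₀ + Lc y) = fun y => x₀ + M.mulVec y := by
      funext y; rw [hLcapp]
    rw [h2] at h1
    exact h1.hasFDerivWithinAt
  have hinj : Set.InjOn (fun y => x₀ + M.mulVec y) S := by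
    intro a _ b _ hab
    have h1 : M.mulVec a = M.mulVec b := by
      have := hab
      simpa using add_left_cancel this
    have h2 := congrArg (fun v => M⁻¹.mulVec v) h1
    simpa [Matrix.mulVec_mulVec, Matrix.nonsing_inv_mul M hM, Matrix.one_mulVec] using h2
  have hcv := integral_image_eq_integral_abs_det_fderiv_smul volume hS hT hinj g
  rw [hcv]
  have hdet : Lc.det = M.det := by
    rw [ContinuousLinearMap.det]
    have : (Lc : (Fin n → ℝ) →ₗ[ℝ] (Fin n → ℝ)) = Matrix.toLin' M := by
      ext y
      simp [hLc]
    rw [this, LinearMap.det_toLin']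
  simp only [hdet, smul_eq_mul]
  rw [integral_const_mul]

/-- On dilated balls `B = x₀ + A^k Δ`, the minimizing polynomial of
degree `≤ s` of `f ∈ L¹(B)` satisfies `sup_{x∈B} |P_B^s f(x)| ≤ C |B|⁻¹ ∫_B |f|`,
with `C` independent of `f` and of the ball. -/
theorem statement12 (n : ℕ) (s : ℕ) (A : Matrix (Fin n) (Fin n) ℝ)
    (hA : ∀ μ : ℂ, ((A.map (algebraMap ℝ ℂ)).charpoly).IsRoot μ → 1 < ‖μ‖)
    (hdet : IsUnit A.det)
    (P : Matrix (Fin n) (Fin n) ℝ) (hP : IsUnit P.det)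
    (Δ : Set (Fin n → ℝ)) (hΔ : Δ = {x | ∑ i, (P.mulVec x i) ^ 2 < 1})
    (hΔvol : volume Δ = 1)
    (r : ℝ) (hr : 1 < r) (h1 : Δ ⊆ r • Δ) (h2 : r • Δ ⊆ A.mulVec '' Δ)
    (B : ℤ → Set (Fin n → ℝ)) (hB : ∀ k : ℤ, B k = (A ^ k).mulVec '' Δ) :
    ∃ C : ℝ, 0 < C ∧
      ∀ (x₀ : Fin n → ℝ) (k : ℤ) (f : (Fin n → ℝ) → ℝ),
        IntegrableOn f ((fun y => x₀ + y) '' B k) volume →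
        ∀ Q : MvPolynomial (Fin n) ℝ, Q.totalDegree ≤ s →
          (∀ h : MvPolynomial (Fin n) ℝ, h.totalDegree ≤ s →
            ∫ x in (fun y => x₀ + y) '' B k,
              (MvPolynomial.eval x h) * (f x - MvPolynomial.eval x Q) = 0) →
          ∀ x ∈ (fun y => x₀ + y) '' B k,
            |MvPolynomial.eval x Q| ≤
              C / (volume ((fun y => x₀ + y) '' B k)).toReal *
                ∫ y in (fun y => x₀ + y) '' B k, |f y| := by
  classical
  -- basic properties of Δ
  have hmulVec_cont : ∀ (N : Matrix (Fin n) (Fin n) ℝ),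
      Continuous fun x : Fin n → ℝ => N.mulVec x := by
    intro N
    have h := (Matrix.toLin' N).continuous_of_finiteDimensional
    exact h
  have hΔo : IsOpen Δ := by
    rw [hΔ]
    have hc : Continuous fun x : Fin n → ℝ => ∑ i, (P.mulVec x i) ^ 2 := by
      refine continuous_finset_sum _ fun i _ => ?_
      exact ((continuous_apply i).comp (hmulVec_cont P)).pow 2
    exact isOpen_lt hc continuous_const
  have hne : Δ.Nonempty := by
    refine ⟨0, ?_⟩
    rw [hΔ]
    simp [Matrix.mulVec_zero]
  have hbdd : Bornology.IsBounded Δ := by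
    have hinvP : Invertible P := P.invertibleOfIsUnitDet hP
    have hsub : Δ ⊆ (fun v => P⁻¹.mulVec v) '' (Metric.closedBall 0 1) := by
      intro x hx
      rw [hΔ] at hx
      refine ⟨P.mulVec x, ?_, ?_⟩
      · rw [Metric.mem_closedBall, dist_zero_right]
        rw [pi_norm_le_iff_of_nonneg zero_le_one]
        intro i
        have h1 : (P.mulVec x i) ^ 2 ≤ ∑ j, (P.mulVec x j) ^ 2 :=
          Finset.single_le_sum (f := fun j => (P.mulVec x j) ^ 2)
            (fun j _ => sq_nonneg _) (Finset.mem_univ i)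
        have h2 : (P.mulVec x i) ^ 2 ≤ 1 := le_of_lt (lt_of_le_of_lt h1 hx)
        rw [Real.norm_eq_abs]
        nlinarith [abs_nonneg (P.mulVec x i), sq_abs (P.mulVec x i)]
      · show P⁻¹.mulVec (P.mulVec x) = x
        rw [Matrix.mulVec_mulVec, Matrix.nonsing_inv_mul P hP, Matrix.one_mulVec]
    refine Bornology.IsBounded.subset ?_ hsub
    have hlip := (LinearMap.toContinuousLinearMap (Matrix.toLin' P⁻¹)).lipschitz
    have himg : (fun v => P⁻¹.mulVec v) '' (Metric.closedBall 0 1)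
        = (LinearMap.toContinuousLinearMap (Matrix.toLin' P⁻¹)) '' (Metric.closedBall 0 1) := by
      congr 1
    rw [himg]
    exact hlip.isBounded_image Metric.isBounded_closedBall
  have hKΔ : IsCompact (closure Δ) :=
    Metric.isCompact_of_isClosed_isBounded isClosed_closure hbdd.closure
  obtain ⟨c, hc, key⟩ := aux_key (s := s) Δ hΔo hne hbdd
  refine ⟨c, hc, ?_⟩
  intro x₀ k f hf Q hQdeg horth x hx
  set M := A ^ k with hM
  have hMdet : IsUnit M.det := hdet.det_zpow k
  have hdetne : M.det ≠ 0 := hMdet.ne_zero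
  have hdetpos : (0:ℝ) < |M.det| := abs_pos.mpr hdetne
  set T : (Fin n → ℝ) → (Fin n → ℝ) := fun y => x₀ + M.mulVec y with hT
  have hBk : (fun y => x₀ + y) '' B k = T '' Δ := by
    rw [hB k, Set.image_image]
  rw [hBk] at hf horth hx ⊢
  -- T as a homeomorphism
  have hinvM : Invertible M := M.invertibleOfIsUnitDet hMdet
  set e : (Fin n → ℝ) ≃L[ℝ] (Fin n → ℝ) :=
    (M.toLinearEquiv' hinvM).toContinuousLinearEquiv with he
  set φ : (Fin n → ℝ) ≃ₜ (Fin n → ℝ) := e.toHomeomorph.trans (Homeomorph.addLeft x₀) with hφ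
  have hφT : (φ : (Fin n → ℝ) → (Fin n → ℝ)) = T := by
    funext y
    show x₀ + (M.toLinearEquiv' hinvM) y = T y
    have : (M.toLinearEquiv' hinvM) y = M.mulVec y := by
      have := Matrix.toLinearEquiv'_apply M hinvM
      calc (M.toLinearEquiv' hinvM) y = ((M.toLinearEquiv' hinvM : Module.End ℝ (Fin n → ℝ))) y := rfl
        _ = (Matrix.toLin' M) y := by rw [this]
        _ = M.mulVec y := Matrix.toLin'_apply M y
    rw [this]
  have hTcont : Continuous T := by rw [← hφT]; exact φ.continuous
  have hclos : closure (T '' Δ) = T '' closure Δ := by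
    rw [← hφT, Homeomorph.image_closure]
  have hTopen : IsOpen (T '' Δ) := by
    rw [← hφT]
    exact (Homeomorph.isOpen_image φ).mpr hΔo
  have hTmeas : MeasurableSet (T '' Δ) := hTopen.measurableSet
  have hKT : IsCompact (closure (T '' Δ)) := by
    rw [hclos]
    exact hKΔ.image hTcont
  have hTbdd : Bornology.IsBounded (T '' Δ) :=
    Bornology.IsBounded.subset hKT.isBounded subset_closure
  -- volume of the ball
  have hvolr : (volume (T '' Δ)).toReal = |M.det| := by
    have himg : T '' Δ = (fun y => x₀ + y) '' ((Matrix.toLin' M) '' Δ) := by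
      rw [Set.image_image]
      congr 1
    rw [himg, Set.image_add_left, MeasureTheory.measure_preimage_add,
      Measure.addHaar_image_linearMap, LinearMap.det_toLin', hΔvol]
    rw [mul_one, ENNReal.toReal_ofReal (abs_nonneg _)]
  rw [hvolr]
  -- the substituted polynomial
  set σf : Fin n → MvPolynomial (Fin n) ℝ :=
    fun i => MvPolynomial.C (x₀ i) + ∑ j, MvPolynomial.C (M i j) * MvPolynomial.X j with hσf
  have hσdeg : ∀ i, (σf i).totalDegree ≤ 1 := by
    intro i
    refine (MvPolynomial.totalDegree_add _ _).trans ?_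
    refine sup_le (by simp [MvPolynomial.totalDegree_C]) ?_
    refine (MvPolynomial.totalDegree_finset_sum _ _).trans ?_
    refine Finset.sup_le fun j _ => ?_
    refine (MvPolynomial.totalDegree_mul _ _).trans ?_
    simp [MvPolynomial.totalDegree_C, MvPolynomial.totalDegree_X]
  set R : MvPolynomial (Fin n) ℝ := MvPolynomial.aeval σf Q with hR
  have hRdeg : R.totalDegree ≤ s :=
    le_trans (aux_totalDegree_aeval_le Q σf hσdeg) hQdeg
  have hReval : ∀ y, MvPolynomial.eval y R = MvPolynomial.eval (T y) Q := by
    intro y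
    rw [hR, MvPolynomial.aeval_def, MvPolynomial.eval_eval₂]
    have hhom : (MvPolynomial.eval y).comp (algebraMap ℝ (MvPolynomial (Fin n) ℝ))
        = RingHom.id ℝ := by
      ext a
      simp [MvPolynomial.algebraMap_eq]
    rw [hhom, MvPolynomial.eval₂_id]
    have hvec : (fun i => MvPolynomial.eval y (σf i)) = T y := by
      funext i
      simp only [hσf, map_add, map_sum, map_mul, MvPolynomial.eval_C, MvPolynomial.eval_X]
      show x₀ i + ∑ j, M i j * y j = T y i
      simp [hT, Matrix.mulVec, dotProduct]
    rw [hvec]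
  -- max of |Q| on the closed ball
  obtain ⟨z, hzK, hzmax'⟩ := hKT.exists_isMaxOn ⟨x, subset_closure hx⟩
    ((Q.continuous_eval.abs).continuousOn)
  have hzmax : ∀ y ∈ closure (T '' Δ), |MvPolynomial.eval y Q| ≤ |MvPolynomial.eval z Q| :=
    fun y hy => isMaxOn_iff.mp hzmax' y hy
  set M0 : ℝ := |MvPolynomial.eval z Q| with hM0
  have hM0nn : 0 ≤ M0 := abs_nonneg _
  -- integrability facts
  have hQmeas : AEStronglyMeasurable (fun y => MvPolynomial.eval y Q)
      (volume.restrict (T '' Δ)) := Q.continuous_eval.aestronglyMeasurable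
  have hQbd : ∀ᵐ y ∂volume.restrict (T '' Δ), ‖MvPolynomial.eval y Q‖ ≤ M0 :=
    ae_restrict_of_forall_mem hTmeas fun y hy => by
      simpa [Real.norm_eq_abs] using hzmax y (subset_closure hy)
  have hQf : IntegrableOn (fun y => MvPolynomial.eval y Q * f y) (T '' Δ) volume :=
    hf.bdd_mul hQmeas hQbd
  have hQQ : IntegrableOn (fun y => MvPolynomial.eval y Q * MvPolynomial.eval y Q)
      (T '' Δ) volume :=
    aux_integrableOn _ (Q.continuous_eval.mul Q.continuous_eval) hTbdd
  have h0 := horth Q hQdeg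
  have hsplit : ∫ y in T '' Δ, MvPolynomial.eval y Q * (f y - MvPolynomial.eval y Q)
      = (∫ y in T '' Δ, MvPolynomial.eval y Q * f y)
        - ∫ y in T '' Δ, MvPolynomial.eval y Q * MvPolynomial.eval y Q := by
    rw [← integral_sub hQf hQQ]
    congr 1
    funext y
    ring
  have hQQf : (∫ y in T '' Δ, MvPolynomial.eval y Q * MvPolynomial.eval y Q)
      = ∫ y in T '' Δ, MvPolynomial.eval y Q * f y := by
    rw [h0] at hsplit
    linarith
  -- bound the mixed integral
  have habs : IntegrableOn (fun y => M0 * |f y|) (T '' Δ) volume := (hf.abs.const_mul M0)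
  have hQfle : (∫ y in T '' Δ, MvPolynomial.eval y Q * f y)
      ≤ M0 * ∫ y in T '' Δ, |f y| := by
    have h1 : (∫ y in T '' Δ, MvPolynomial.eval y Q * f y)
        ≤ ∫ y in T '' Δ, M0 * |f y| := by
      refine setIntegral_mono_on hQf habs hTmeas fun y hy => ?_
      calc MvPolynomial.eval y Q * f y ≤ |MvPolynomial.eval y Q * f y| := le_abs_self _
        _ = |MvPolynomial.eval y Q| * |f y| := abs_mul _ _
        _ ≤ M0 * |f y| :=
            mul_le_mul_of_nonneg_right (hzmax y (subset_closure hy)) (abs_nonneg _)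
    rwa [integral_const_mul] at h1
  -- the key estimate at the maximizing point
  have hzΔ : ∃ u ∈ closure Δ, T u = z := by
    rw [hclos] at hzK
    obtain ⟨u, hu, huz⟩ := hzK
    exact ⟨u, hu, huz⟩
  obtain ⟨u, hu, huz⟩ := hzΔ
  have hkey := key R hRdeg u hu
  rw [hReval u, huz] at hkey
  -- change of variables
  have hcov := aux_cov M hMdet x₀ hΔo.measurableSet (fun x => (MvPolynomial.eval x Q) ^ 2)
  have hIQQ : (∫ y in Δ, (MvPolynomial.eval y R) ^ 2)
      = |M.det|⁻¹ * ∫ x in T '' Δ, (MvPolynomial.eval x Q) ^ 2 := by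
    have h2 : (∫ y in Δ, (MvPolynomial.eval y R) ^ 2)
        = ∫ y in Δ, (MvPolynomial.eval (T y) Q) ^ 2 := by
      congr 1
      funext y
      rw [hReval]
    rw [h2]
    have h3 : T '' Δ = (fun y => x₀ + M.mulVec y) '' Δ := rfl
    rw [h3, hcov]
    rw [← mul_assoc, inv_mul_cancel₀ (by positivity), one_mul]
  have hIsq : (∫ x in T '' Δ, (MvPolynomial.eval x Q) ^ 2)
      = ∫ y in T '' Δ, MvPolynomial.eval y Q * MvPolynomial.eval y Q := by
    congr 1
    funext y
    ring
  have hfint_nn : (0:ℝ) ≤ ∫ y in T '' Δ, |f y| := integral_nonneg fun y => abs_nonneg _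
  have hM0sq : M0 ^ 2 ≤ c * |M.det|⁻¹ * (M0 * ∫ y in T '' Δ, |f y|) := by
    rw [hIQQ, hIsq, hQQf] at hkey
    have hsq : M0 ^ 2 = (MvPolynomial.eval z Q) ^ 2 := sq_abs _
    rw [hsq]
    calc (MvPolynomial.eval z Q) ^ 2
        ≤ c * (|M.det|⁻¹ * ∫ y in T '' Δ, MvPolynomial.eval y Q * f y) := hkey
      _ ≤ c * (|M.det|⁻¹ * (M0 * ∫ y in T '' Δ, |f y|)) := by
          refine mul_le_mul_of_nonneg_left ?_ hc.le
          exact mul_le_mul_of_nonneg_left hQfle (inv_nonneg.mpr (abs_nonneg _))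
      _ = c * |M.det|⁻¹ * (M0 * ∫ y in T '' Δ, |f y|) := by ring
  have hfinal : M0 ≤ c / |M.det| * ∫ y in T '' Δ, |f y| := by
    rcases eq_or_lt_of_le hM0nn with hM00 | hM0pos
    · rw [← hM00]
      positivity
    · have h3 : M0 * M0 ≤ (c / |M.det| * ∫ y in T '' Δ, |f y|) * M0 := by
        rw [sq] at hM0sq
        calc M0 * M0 ≤ c * |M.det|⁻¹ * (M0 * ∫ y in T '' Δ, |f y|) := hM0sq
          _ = (c / |M.det| * ∫ y in T '' Δ, |f y|) * M0 := by
              field_simp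
      exact le_of_mul_le_mul_right h3 hM0pos
  calc |MvPolynomial.eval x Q| ≤ M0 := hzmax x (subset_closure hx)
    _ ≤ c / |M.det| * ∫ y in T '' Δ, |f y| := hfinal
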